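/- Let γ > 0. There exists t > 0 such that ∫_ℝ cos(p t) · p² / (p⁴ + γ⁴) dp < 0. In other words, the two-point Schwinger function of the Gribov-type gluon propagator is not nonnegative as a function of (Euclidean) time, so it violates the reflection positivity requirement. -/

import Mathlib

open Real MeasureTheory Filter FourierTransform

section aux

variable {γ : ℝ}

lemma gribov_denom_pos (hγ : 0 < γ) (p : ℝ) : 0 < p ^ 4 + γ ^ 4 := by positivity

lemma gribov_cont_sin (hγ : 0 < γ) (x : ℝ) :
    Continuous fun p : ℝ => Real.sin (p * x) * p / (p ^ 4 + γ ^ 4) :=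
  Continuous.div
    ((Real.continuous_sin.comp (continuous_id.mul continuous_const)).mul continuous_id)
    (by continuity) fun p => (gribov_denom_pos hγ p).ne'

lemma gribov_cont_cos (hγ : 0 < γ) (x : ℝ) :
    Continuous fun p : ℝ => Real.cos (p * x) * p ^ 2 / (p ^ 4 + γ ^ 4) :=
  Continuous.div
    ((Real.continuous_cos.comp (continuous_id.mul continuous_const)).mul (by continuity))
    (by continuity) fun p => (gribov_denom_pos hγ p).ne'

lemma gribov_bound_cos (hγ : 0 < γ) (p x : ℝ) :
    ‖Real.cos (p * x) * p ^ 2 / (p ^ 4 + γ ^ 4)‖ ≤ p ^ 2 / (p ^ 4 + γ ^ 4) := by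
  have h1 : (0:ℝ) < p ^ 4 + γ ^ 4 := gribov_denom_pos hγ p
  rw [Real.norm_eq_abs, abs_div, abs_of_nonneg h1.le]
  apply div_le_div_of_nonneg_right _ h1.le
  calc |Real.cos (p * x) * p ^ 2| = |Real.cos (p * x)| * |p ^ 2| := abs_mul _ _
    _ ≤ 1 * |p ^ 2| := mul_le_mul_of_nonneg_right (Real.abs_cos_le_one _) (abs_nonneg _)
    _ = p ^ 2 := by rw [one_mul, abs_of_nonneg (sq_nonneg p)]

lemma gribov_bound_sin (hγ : 0 < γ) (p x : ℝ) :
    ‖Real.sin (p * x) * p / (p ^ 4 + γ ^ 4)‖ ≤ ‖p / (p ^ 4 + γ ^ 4)‖ := by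
  have h1 : (0:ℝ) < p ^ 4 + γ ^ 4 := gribov_denom_pos hγ p
  rw [Real.norm_eq_abs, Real.norm_eq_abs, abs_div, abs_of_nonneg h1.le, abs_div,
    abs_of_nonneg h1.le]
  apply div_le_div_of_nonneg_right _ h1.le
  calc |Real.sin (p * x) * p| = |Real.sin (p * x)| * |p| := abs_mul _ _
    _ ≤ 1 * |p| := mul_le_mul_of_nonneg_right (Real.abs_sin_le_one _) (abs_nonneg _)
    _ = |p| := one_mul _

lemma gribov_integrable_aux (hγ : 0 < γ) :
    Integrable (fun p : ℝ => 2 / (p ^ 2 + γ ^ 2)) := by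
  have h2 : Integrable (fun p : ℝ => (1 + (p / γ) ^ 2)⁻¹) :=
    integrable_inv_one_add_sq.comp_div (ne_of_gt hγ)
  have h3 := h2.const_mul (2 / γ ^ 2)
  refine h3.congr (Eventually.of_forall fun p => ?_)
  have hγ2 : (0:ℝ) < γ ^ 2 := by positivity
  have hpγ : (0:ℝ) < p ^ 2 + γ ^ 2 := by positivity
  field_simp
  ring

lemma gribov_integrable_f (hγ : 0 < γ) :
    Integrable (fun p : ℝ => p ^ 2 / (p ^ 4 + γ ^ 4)) := by
  refine (gribov_integrable_aux hγ).mono ?_ (Eventually.of_forall fun p => ?_)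
  · exact (Continuous.div (by continuity) (by continuity)
      (fun p => (gribov_denom_pos hγ p).ne')).aestronglyMeasurable
  · have h1 : (0:ℝ) < p ^ 4 + γ ^ 4 := gribov_denom_pos hγ p
    have h2 : (0:ℝ) < p ^ 2 + γ ^ 2 := by positivity
    rw [Real.norm_eq_abs, Real.norm_eq_abs, abs_of_nonneg (by positivity),
      abs_of_nonneg (by positivity)]
    rw [div_le_div_iff₀ h1 h2]
    nlinarith [sq_nonneg (p ^ 2 - γ ^ 2), sq_nonneg p, sq_nonneg γ]

lemma gribov_integrable_g (hγ : 0 < γ) :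
    Integrable (fun p : ℝ => p / (p ^ 4 + γ ^ 4)) := by
  refine ((gribov_integrable_aux hγ).const_mul (1 / γ)).mono ?_
    (Eventually.of_forall fun p => ?_)
  · exact (Continuous.div (by continuity) (by continuity)
      (fun p => (gribov_denom_pos hγ p).ne')).aestronglyMeasurable
  · have h1 : (0:ℝ) < p ^ 4 + γ ^ 4 := gribov_denom_pos hγ p
    have h2 : (0:ℝ) < p ^ 2 + γ ^ 2 := by positivity
    have h3 : (0:ℝ) < 1 / γ * (2 / (p ^ 2 + γ ^ 2)) := by positivity
    rw [Real.norm_eq_abs, Real.norm_eq_abs, abs_div, abs_of_nonneg h1.le,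
      abs_of_nonneg h3.le,
      show (1:ℝ) / γ * (2 / (p ^ 2 + γ ^ 2)) = 2 / (γ * (p ^ 2 + γ ^ 2)) by field_simp,
      div_le_div_iff₀ h1 (by positivity)]
    have ha : |p| ^ 2 = p ^ 2 := sq_abs p
    have ha4 : |p| ^ 4 = p ^ 4 := by
      rw [show (4:ℕ) = 2 * 2 from rfl, pow_mul, pow_mul, sq_abs]
    nlinarith [abs_nonneg p, sq_nonneg (|p| ^ 2 - |p| * γ), sq_nonneg (|p| * γ - γ ^ 2),
      sq_nonneg (|p| ^ 2 - γ ^ 2), sq_nonneg (|p| - γ)]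

/-- The Schwinger function. -/
noncomputable def gribovS (γ t : ℝ) : ℝ :=
  ∫ p : ℝ, Real.cos (p * t) * p ^ 2 / (p ^ 4 + γ ^ 4)

/-- A primitive of the Schwinger function. -/
noncomputable def gribovF (γ t : ℝ) : ℝ :=
  ∫ p : ℝ, Real.sin (p * t) * p / (p ^ 4 + γ ^ 4)

set_option maxHeartbeats 1000000 in
lemma gribovF_hasDeriv (hγ : 0 < γ) (t : ℝ) :
    HasDerivAt (gribovF γ) (gribovS γ t) t := by
  have key := hasDerivAt_integral_of_dominated_loc_of_deriv_le (μ := volume) (x₀ := t)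
    (F := fun x p => Real.sin (p * x) * p / (p ^ 4 + γ ^ 4))
    (F' := fun x p => Real.cos (p * x) * p ^ 2 / (p ^ 4 + γ ^ 4))
    (bound := fun p => p ^ 2 / (p ^ 4 + γ ^ 4)) (s := Set.univ) Filter.univ_mem
    (Eventually.of_forall fun x => (gribov_cont_sin hγ x).aestronglyMeasurable)
    ((gribov_integrable_g hγ).mono (gribov_cont_sin hγ t).aestronglyMeasurable
      (Eventually.of_forall fun p => gribov_bound_sin hγ p t))
    ((gribov_cont_cos hγ t).aestronglyMeasurable)
    (Eventually.of_forall fun p x _ => gribov_bound_cos hγ p x)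
    (gribov_integrable_f hγ)
    (Eventually.of_forall fun p x _ => by
      have h1 : HasDerivAt (fun x : ℝ => p * x) p x := by
        simpa using (hasDerivAt_id x).const_mul p
      have h2 : HasDerivAt (fun x : ℝ => Real.sin (p * x)) (Real.cos (p * x) * p) x :=
        (Real.hasDerivAt_sin (p * x)).comp x h1
      have h3 := (h2.mul_const p).div_const (p ^ 4 + γ ^ 4)
      exact h3.congr_deriv (by ring))
  exact key.2

lemma gribovS_tendsto (hγ : 0 < γ) :
    Tendsto (gribovS γ) (nhds 0) (nhds (∫ p : ℝ, p ^ 2 / (p ^ 4 + γ ^ 4))) := by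
  refine tendsto_integral_filter_of_dominated_convergence (fun p => p ^ 2 / (p ^ 4 + γ ^ 4))
    (Eventually.of_forall fun x => (gribov_cont_cos hγ x).aestronglyMeasurable)
    (Eventually.of_forall fun x => Eventually.of_forall fun p => gribov_bound_cos hγ p x)
    (gribov_integrable_f hγ) (Eventually.of_forall fun p => ?_)
  have hc : Continuous fun t : ℝ => Real.cos (p * t) * p ^ 2 / (p ^ 4 + γ ^ 4) :=
    Continuous.div ((Real.continuous_cos.comp (continuous_const.mul continuous_id)).mul
      continuous_const) continuous_const fun _ => (gribov_denom_pos hγ p).ne'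
  have := hc.tendsto 0
  simpa using this

lemma gribov_c_pos (hγ : 0 < γ) : 0 < ∫ p : ℝ, p ^ 2 / (p ^ 4 + γ ^ 4) := by
  rw [integral_pos_iff_support_of_nonneg
    (fun p => by
      have := gribov_denom_pos hγ p
      positivity) (gribov_integrable_f hγ)]
  have hsub : Set.Ioi (0:ℝ) ⊆ Function.support fun p : ℝ => p ^ 2 / (p ^ 4 + γ ^ 4) := by
    intro p hp
    have h1 : (0:ℝ) < p ^ 4 + γ ^ 4 := gribov_denom_pos hγ p
    have hp' : (0:ℝ) < p := hp
    have : 0 < p ^ 2 / (p ^ 4 + γ ^ 4) := by positivity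
    exact this.ne'
  calc (0:ENNReal) < volume (Set.Ioi (0:ℝ)) := by simp [Real.volume_Ioi]
    _ ≤ _ := measure_mono hsub

set_option maxHeartbeats 1000000 in
lemma gribovF_tendsto (hγ : 0 < γ) : Tendsto (gribovF γ) atTop (nhds 0) := by
  set g : ℝ → ℂ := fun p => ((p / (p ^ 4 + γ ^ 4) : ℝ) : ℂ) with hgdef
  have hgint' : Integrable g := (gribov_integrable_g hγ).ofReal
  have hRL : Tendsto (𝓕 g) (cocompact ℝ) (nhds 0) := Real.zero_at_infty_fourier g
  have h2π : (0:ℝ) < 2 * π := by positivity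
  have hcomp : Tendsto (fun T : ℝ => T / (2 * π)) atTop (cocompact ℝ) :=
    (Tendsto.atTop_div_const h2π tendsto_id).mono_right _root_.atTop_le_cocompact
  have h2 : Tendsto (fun T : ℝ => -(𝓕 g (T / (2 * π))).im) atTop (nhds 0) := by
    have := ((Complex.continuous_im.tendsto 0).comp (hRL.comp hcomp)).neg
    simpa using this
  have hFeq : ∀ T : ℝ, gribovF γ T = -(𝓕 g (T / (2 * π))).im := by
    intro T
    rw [Real.fourier_real_eq_integral_exp_smul]
    have hintc : Integrable (fun v : ℝ =>
        Complex.exp (↑(-2 * π * v * (T / (2 * π))) * Complex.I) • g v) := by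
      have hb : ∀ v : ℝ,
          ‖Complex.exp (↑(-2 * π * v * (T / (2 * π))) * Complex.I)‖ ≤ 1 := by
        intro v
        rw [Complex.norm_exp_ofReal_mul_I]
      have hmc : Continuous fun v : ℝ =>
          Complex.exp (↑(-2 * π * v * (T / (2 * π))) * Complex.I) :=
        Complex.continuous_exp.comp (by continuity)
      have := hgint'.bdd_mul hmc.aestronglyMeasurable (Eventually.of_forall hb)
      simpa [smul_eq_mul] using this
    have him := Complex.imCLM.integral_comp_comm hintc
    simp only [Complex.imCLM_apply] at him
    rw [← him]
    rw [gribovF, ← integral_neg]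
    apply integral_congr_ae
    refine Eventually.of_forall fun v => ?_
    have harg : -2 * π * v * (T / (2 * π)) = -(v * T) := by
      field_simp
    beta_reduce
    rw [harg, smul_eq_mul]
    have : (Complex.exp (↑(-(v * T)) * Complex.I) * g v).im
        = Real.sin (-(v * T)) * (v / (v ^ 4 + γ ^ 4)) := by
      simp only [hgdef, Complex.mul_im, Complex.exp_ofReal_mul_I_im,
        Complex.exp_ofReal_mul_I_re, Complex.ofReal_im, Complex.ofReal_re, mul_zero, zero_add]
    rw [this, Real.sin_neg]
    ring
  exact h2.congr fun T => (hFeq T).symm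

end aux

/-- The two-point Schwinger function of the Gribov-type gluon propagator is
negative for some positive Euclidean time, violating reflection positivity. -/
theorem gribov_schwinger_reflection_positivity_violation (γ : ℝ) (hγ : 0 < γ) :
    ∃ t : ℝ, 0 < t ∧ ∫ p : ℝ, Real.cos (p * t) * p ^ 2 / (p ^ 4 + γ ^ 4) < 0 := by
  by_contra hcon
  push_neg at hcon
  have hSnonneg : ∀ t : ℝ, 0 < t → 0 ≤ gribovS γ t := fun t ht => hcon t ht
  set c : ℝ := ∫ p : ℝ, p ^ 2 / (p ^ 4 + γ ^ 4) with hcdef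
  have hc0 : 0 < c := gribov_c_pos hγ
  -- get δ
  obtain ⟨ε, hε, hball⟩ := Metric.eventually_nhds_iff.mp
    ((gribovS_tendsto hγ).eventually (eventually_gt_nhds (by linarith : c / 2 < c)))
  set δ : ℝ := ε / 2 with hδdef
  have hδpos : 0 < δ := by positivity
  have hF0 : gribovF γ 0 = 0 := by simp [gribovF]
  -- F δ ≥ c/2 * δ
  have hmono1 : MonotoneOn (fun t => gribovF γ t - c / 2 * t) (Set.Icc 0 δ) := by
    have hG : ∀ x : ℝ, HasDerivAt (fun t => gribovF γ t - c / 2 * t) (gribovS γ x - c / 2) x := by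
      intro x
      have h1 : HasDerivAt (fun t : ℝ => c / 2 * t) (c / 2) x := by
        simpa using (hasDerivAt_id x).const_mul (c / 2)
      exact (gribovF_hasDeriv hγ x).sub h1
    refine monotoneOn_of_deriv_nonneg (convex_Icc 0 δ)
      (fun x _ => ((hG x).differentiableAt.continuousAt).continuousWithinAt)
      (fun x hx => ((hG x).differentiableAt).differentiableWithinAt)
      (fun x hx => ?_)
    rw [interior_Icc] at hx
    rw [(hG x).deriv]
    have hxd : dist x 0 < ε := by
      rw [Real.dist_eq, sub_zero, abs_of_pos hx.1]
      have := hx.2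
      rw [hδdef] at this
      linarith
    have := hball hxd
    linarith
  have hFδ : c / 2 * δ ≤ gribovF γ δ := by
    have := hmono1 (Set.left_mem_Icc.mpr hδpos.le) (Set.right_mem_Icc.mpr hδpos.le) hδpos.le
    simp only [hF0] at this
    linarith
  -- F monotone on [δ, ∞)
  have hmono2 : MonotoneOn (gribovF γ) (Set.Ici δ) := by
    refine monotoneOn_of_deriv_nonneg (convex_Ici δ)
      (fun x _ => ((gribovF_hasDeriv hγ x).differentiableAt.continuousAt).continuousWithinAt)
      (fun x hx => ((gribovF_hasDeriv hγ x).differentiableAt).differentiableWithinAt)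
      (fun x hx => ?_)
    rw [interior_Ici] at hx
    rw [(gribovF_hasDeriv hγ x).deriv]
    exact hSnonneg x (lt_trans hδpos hx)
  -- contradiction
  have hev : ∀ᶠ T in atTop, c / 2 * δ ≤ gribovF γ T := by
    filter_upwards [eventually_ge_atTop δ] with T hT
    exact le_trans hFδ (hmono2 Set.self_mem_Ici hT hT)
  have hfinal : c / 2 * δ ≤ 0 := ge_of_tendsto (gribovF_tendsto hγ) hev
  nlinarith
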